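/- For every n ≥ 4, the graph obtained from K_1 + K_n by joining the isolated vertex to a vertex of K_n (i.e., K_n with a pendant vertex attached) has product irregularity strength 3. -/

import Mathlib

open Finset

open scoped Classical in
/-- The product degree of vertex `v`: the product of the labels of the edges incident with `v`. -/
noncomputable def pdeg {V : Type*} [Fintype V] (G : SimpleGraph V) (w : Sym2 V → ℕ) (v : V) : ℕ :=
  ∏ u ∈ Finset.univ.filter (fun u => G.Adj v u), w s(v, u)

/-- A labelling is product-irregular if distinct vertices have distinct product degrees. -/
def ProductIrregular {V : Type*} [Fintype V] (G : SimpleGraph V) (w : Sym2 V → ℕ) : Prop :=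
  Function.Injective (pdeg G w)

/-- The product irregularity strength: the least `s` admitting a product-irregular labelling
with labels in `{1,…,s}`. -/
noncomputable def ps {V : Type*} [Fintype V] (G : SimpleGraph V) : ℕ :=
  sInf {s : ℕ | ∃ w : Sym2 V → ℕ,
    (∀ u v : V, G.Adj u v → w s(u, v) ∈ Finset.Icc 1 s) ∧ ProductIrregular G w}
/-- The disjoint union `K_n + K_m` of two complete graphs. -/
def cliquePair (n m : ℕ) : SimpleGraph (Fin n ⊕ Fin m) where
  Adj a b := a ≠ b ∧ a.isLeft = b.isLeft
  symm := ⟨fun a b h => ⟨h.1.symm, h.2.symm⟩⟩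
  loopless := ⟨fun a h => h.1 rfl⟩

/-- Adding a single edge joining `u` and `v`. -/
def addEdge {V : Type*} (G : SimpleGraph V) (u v : V) : SimpleGraph V :=
  G ⊔ SimpleGraph.fromEdgeSet {s(u, v)}

section Aux
variable {n : ℕ} {b : Fin n}

lemma adj_inr_inr (i j : Fin n) :
    (addEdge (cliquePair 1 n) (Sum.inl 0) (Sum.inr b)).Adj (Sum.inr i) (Sum.inr j) ↔ i ≠ j := by
  simp [addEdge, cliquePair, SimpleGraph.fromEdgeSet_adj, Sym2.eq_iff]


lemma adj_inr_inl (i : Fin n) (a : Fin 1) :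
    (addEdge (cliquePair 1 n) (Sum.inl 0) (Sum.inr b)).Adj (Sum.inr i) (Sum.inl a) ↔ i = b := by
  have : a = 0 := Subsingleton.elim _ _
  subst this
  simp [addEdge, cliquePair, SimpleGraph.fromEdgeSet_adj, Sym2.eq_iff]


lemma adj_inl (a : Fin 1) (y : Fin 1 ⊕ Fin n) :
    (addEdge (cliquePair 1 n) (Sum.inl 0) (Sum.inr b)).Adj (Sum.inl a) y ↔ y = Sum.inr b := by
  have : a = 0 := Subsingleton.elim _ _
  subst this
  cases y with
  | inl c =>
    have : c = 0 := Subsingleton.elim _ _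
    subst this
    simp [addEdge, cliquePair, SimpleGraph.fromEdgeSet_adj, Sym2.eq_iff]
  | inr j =>
    simp [addEdge, cliquePair, SimpleGraph.fromEdgeSet_adj, Sym2.eq_iff]



open scoped Classical in
lemma pdeg_eq {V : Type*} [Fintype V] (G : SimpleGraph V) (w : Sym2 V → ℕ) (v : V) :
    pdeg G w v = ∏ u : V, if G.Adj v u then w s(v, u) else 1 := by
  rw [pdeg, Finset.prod_filter]

open scoped Classical in
lemma pdeg_inl (w : Sym2 (Fin 1 ⊕ Fin n) → ℕ) (a : Fin 1) :
    pdeg (addEdge (cliquePair 1 n) (Sum.inl 0) (Sum.inr b)) w (Sum.inl a)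
      = w s(Sum.inl a, Sum.inr b) := by
  rw [pdeg_eq, Fintype.prod_sum_type]
  simp [adj_inl]

open scoped Classical in
lemma pdeg_inr (w : Sym2 (Fin 1 ⊕ Fin n) → ℕ) (i : Fin n) :
    pdeg (addEdge (cliquePair 1 n) (Sum.inl 0) (Sum.inr b)) w (Sum.inr i)
      = (if i = b then w s(Sum.inr i, Sum.inl 0) else 1)
        * ∏ j : Fin n, (if i ≠ j then w s(Sum.inr i, Sum.inr j) else 1) := by
  rw [pdeg_eq, Fintype.prod_sum_type]
  congr 1
  · rw [Fin.prod_univ_one]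
    simp [adj_inr_inl]
  · exact Finset.prod_congr rfl (fun j _ => by rw [adj_inr_inr]; congr)


open scoped Classical in
lemma two_pow_card_eq {V : Type*} [Fintype V] (G : SimpleGraph V)
    (w : Sym2 V → ℕ)
    (hw : ∀ u v : V, G.Adj u v → w s(u, v) ∈ Finset.Icc 1 2) (v : V) :
    pdeg G w v = 2 ^ (univ.filter (fun u => G.Adj v u ∧ w s(v, u) = 2)).card := by
  classical
  rw [pdeg]
  have h1 : ∀ u ∈ univ.filter (fun u => G.Adj v u), w s(v, u)
      = if w s(v, u) = 2 then 2 else 1 := by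
    intro u hu
    simp only [Finset.mem_filter] at hu
    have := hw v u hu.2
    simp only [Finset.mem_Icc] at this
    rcases Nat.lt_or_ge (w s(v, u)) 2 with h | h
    · have : w s(v, u) = 1 := by omega
      simp [this]
    · have : w s(v, u) = 2 := by omega
      simp [this]
  rw [Finset.prod_congr rfl h1, Finset.prod_ite, Finset.prod_const, Finset.prod_const,
    one_pow, mul_one, Finset.filter_filter]

lemma no_two_labelling (hn : 4 ≤ n)
    (w : Sym2 (Fin 1 ⊕ Fin n) → ℕ)
    (hw : ∀ u v : Fin 1 ⊕ Fin n,
      (addEdge (cliquePair 1 n) (Sum.inl 0) (Sum.inr b)).Adj u v → w s(u, v) ∈ Finset.Icc 1 2) :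
    ¬ ProductIrregular (addEdge (cliquePair 1 n) (Sum.inl 0) (Sum.inr b)) w := by
  classical
  intro hinj
  set G := addEdge (cliquePair 1 n) (Sum.inl 0) (Sum.inr b) with hG
  set a : (Fin 1 ⊕ Fin n) → ℕ :=
    fun v => (univ.filter (fun u => G.Adj v u ∧ w s(v, u) = 2)).card with ha
  have key : ∀ v, pdeg G w v = 2 ^ a v := fun v => two_pow_card_eq G w hw v
  have hainj : Function.Injective a := by
    intro x y hxy
    apply hinj
    rw [key, key, hxy]
  have hcardV : Fintype.card (Fin 1 ⊕ Fin n) = n + 1 := by simp [Nat.add_comm]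
  have hle : ∀ v, a v ≤ n := by
    intro v
    have hsub : (univ.filter (fun u => G.Adj v u ∧ w s(v, u) = 2)) ⊆ univ.erase v := by
      intro u hu
      simp only [Finset.mem_filter] at hu
      exact Finset.mem_erase.2 ⟨(hu.2.1).ne', Finset.mem_univ _⟩
    calc a v ≤ (univ.erase v).card := Finset.card_le_card hsub
    _ = n := by rw [Finset.card_erase_of_mem (Finset.mem_univ _), Finset.card_univ, hcardV]; omega
  have himg : Finset.image a univ = Finset.range (n + 1) := by
    apply Finset.eq_of_subset_of_card_le
    · intro x hx
      simp only [Finset.mem_image] at hx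
      obtain ⟨v, _, rfl⟩ := hx
      exact Finset.mem_range.2 (Nat.lt_succ_of_le (hle v))
    · rw [Finset.card_range, Finset.card_image_of_injective _ hainj, Finset.card_univ, hcardV]
  -- vertex with a v = n
  have hvn : ∃ v, a v = n := by
    have : n ∈ Finset.image a univ := by rw [himg]; simp
    simpa using this
  obtain ⟨v, hv⟩ := hvn
  have hfull : ∀ u, u ≠ v → G.Adj v u ∧ w s(v, u) = 2 := by
    have hsub : (univ.filter (fun u => G.Adj v u ∧ w s(v, u) = 2)) ⊆ univ.erase v := by
      intro u hu
      simp only [Finset.mem_filter] at hu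
      exact Finset.mem_erase.2 ⟨(hu.2.1).ne', Finset.mem_univ _⟩
    have hcard : (univ.erase v).card ≤ (univ.filter (fun u => G.Adj v u ∧ w s(v, u) = 2)).card := by
      have hv' : (univ.filter (fun u => G.Adj v u ∧ w s(v, u) = 2)).card = n := hv
      rw [Finset.card_erase_of_mem (Finset.mem_univ _), Finset.card_univ, hcardV]
      omega
    have := Finset.eq_of_subset_of_card_le hsub hcard
    intro u hu
    have : u ∈ univ.filter (fun u => G.Adj v u ∧ w s(v, u) = 2) := by
      rw [this]; exact Finset.mem_erase.2 ⟨hu, Finset.mem_univ _⟩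
    simpa using this
  -- v = inr b
  have hvb : v = Sum.inr b := by
    rcases v with x | i
    · exfalso
      obtain ⟨j, hj⟩ : ∃ j : Fin n, j ≠ b := by
        rcases Nat.lt_or_ge (b.val + 1) n with h | h
        · refine ⟨⟨b.val + 1, h⟩, Fin.ne_of_val_ne ?_⟩
          simp
        · refine ⟨⟨0, by omega⟩, Fin.ne_of_val_ne ?_⟩
          have hb := b.isLt
          simp only [Fin.val]
          omega
      have := (hfull (Sum.inr j) (by simp)).1
      rw [hG, adj_inl] at this
      exact hj (Sum.inr.inj this)
    · rcases Decidable.eq_or_ne i b with h | h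
      · rw [h]
      · exfalso
        have := (hfull (Sum.inl 0) (by simp)).1
        rw [hG, adj_inr_inl] at this
        exact h this
  subst hvb
  -- a (inl 0) = 1
  have hal : a (Sum.inl 0) = 1 := by
    have : (univ.filter (fun u => G.Adj (Sum.inl 0) u ∧ w s(Sum.inl 0, u) = 2))
        = {Sum.inr b} := by
      ext u
      simp only [Finset.mem_filter, Finset.mem_univ, true_and, Finset.mem_singleton]
      constructor
      · rintro ⟨hadj, -⟩
        rw [hG, adj_inl] at hadj
        exact hadj
      · rintro rfl
        refine ⟨by rw [hG, adj_inl], ?_⟩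
        have := (hfull (Sum.inl 0) (by simp)).2
        rwa [Sym2.eq_swap] at this
    rw [ha]
    simp only [this, Finset.card_singleton]
  -- vertex with a v0 = 0
  have hv0 : ∃ v0, a v0 = 0 := by
    have : 0 ∈ Finset.image a univ := by rw [himg]; simp
    simpa using this
  obtain ⟨v0, hv0⟩ := hv0
  rcases v0 with x | j
  · have hx : x = 0 := Subsingleton.elim _ _
    rw [hx, hal] at hv0
    omega
  · have hjb : j ≠ b := by
      intro h; rw [h, hv] at hv0; omega
    have hmem : Sum.inr b ∈ (univ.filter
        (fun u => G.Adj (Sum.inr j) u ∧ w s(Sum.inr j, u) = 2)) := by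
      simp only [Finset.mem_filter, Finset.mem_univ, true_and]
      refine ⟨by rw [hG, adj_inr_inr]; exact hjb, ?_⟩
      have := (hfull (Sum.inr j) (by simp [hjb])).2
      rwa [Sym2.eq_swap] at this
    have : (univ.filter (fun u => G.Adj (Sum.inr j) u ∧ w s(Sum.inr j, u) = 2)).card ≠ 0 :=
      Finset.card_ne_zero_of_mem hmem
    exact this hv0


/-- Edge label between naturals `i`, `j` (names of `K_n` vertices). -/
def gg (n i j : ℕ) : ℕ :=
  if i ≠ j ∧ n ≤ i + j then 2
  else if (i = 0 ∧ j = (n + 1) / 2) ∨ (i = (n + 1) / 2 ∧ j = 0) then 3 else 1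

lemma gg_comm (n i j : ℕ) : gg n i j = gg n j i := by
  unfold gg
  refine if_congr (by constructor <;> (rintro ⟨h1, h2⟩; exact ⟨by omega, by omega⟩)) rfl ?_
  exact if_congr (by tauto) rfl rfl

def fff (n : ℕ) : (Fin 1 ⊕ Fin n) → (Fin 1 ⊕ Fin n) → ℕ
  | Sum.inr i, Sum.inr j => gg n i.val j.val
  | _, _ => 1

lemma fff_comm (n : ℕ) : ∀ x y, fff n x y = fff n y x := by
  rintro (a | i) (c | j) <;> simp [fff, gg_comm]

noncomputable def www (n : ℕ) : Sym2 (Fin 1 ⊕ Fin n) → ℕ := Sym2.lift ⟨fff n, fff_comm n⟩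

lemma www_mk (n : ℕ) (x y : Fin 1 ⊕ Fin n) : www n s(x, y) = fff n x y := rfl

lemma fff_mem (n : ℕ) (x y : Fin 1 ⊕ Fin n) : fff n x y ∈ Finset.Icc 1 3 := by
  rcases x with a | i <;> rcases y with c | j <;> simp [fff, gg] <;> split_ifs <;> simp

lemma prod_ite_const {n : ℕ} (p : Fin n → Prop) [DecidablePred p] (k : ℕ) :
    (∏ j : Fin n, if p j then k else 1) = k ^ (univ.filter p).card := by
  rw [Finset.prod_ite, Finset.prod_const, Finset.prod_const, one_pow, mul_one]

lemma card_filter_val {n : ℕ} (p : ℕ → Prop) [DecidablePred p] :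
    (univ.filter (fun j : Fin n => p j.val)).card = ((Finset.range n).filter p).card := by
  apply Finset.card_bij (fun j _ => j.val)
  · intro a ha
    simp only [Finset.mem_filter, Finset.mem_univ, true_and] at ha
    simp [a.isLt, ha]
  · intro a _ a' _ h
    exact Fin.ext h
  · intro c hc
    simp only [Finset.mem_filter, Finset.mem_range] at hc
    exact ⟨⟨c, hc.1⟩, by simp [hc.2], rfl⟩

lemma card_D {n : ℕ} (i : Fin n) :
    (univ.filter (fun j : Fin n => i.val ≠ j.val ∧ n ≤ i.val + j.val)).card
      = if n ≤ 2 * i.val then i.val - 1 else i.val := by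
  rw [card_filter_val (fun j => i.val ≠ j ∧ n ≤ i.val + j)]
  have hI : ((Finset.range n).filter (fun j => i.val ≠ j ∧ n ≤ i.val + j))
      = (Finset.Ico (n - i.val) n).erase i.val := by
    ext a
    simp only [Finset.mem_filter, Finset.mem_range, Finset.mem_erase, Finset.mem_Ico]
    omega
  rw [hI]
  have hi := i.isLt
  by_cases h : n ≤ 2 * i.val
  · rw [Finset.card_erase_of_mem (by simp only [Finset.mem_Ico]; omega), Nat.card_Ico]
    simp only [h, if_true]
    omega
  · rw [Finset.erase_eq_of_notMem (by simp only [Finset.mem_Ico]; omega), Nat.card_Ico]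
    simp only [h, if_false]
    omega

lemma card_T {n : ℕ} (hn : 4 ≤ n) (i : Fin n) :
    (univ.filter (fun j : Fin n =>
        (i.val = 0 ∧ j.val = (n + 1) / 2) ∨ (i.val = (n + 1) / 2 ∧ j.val = 0))).card
      = if i.val = 0 ∨ i.val = (n + 1) / 2 then 1 else 0 := by
  rw [card_filter_val (fun j => (i.val = 0 ∧ j = (n + 1) / 2) ∨ (i.val = (n + 1) / 2 ∧ j = 0))]
  by_cases h0 : i.val = 0
  · have : ((Finset.range n).filter (fun j =>
        (i.val = 0 ∧ j = (n + 1) / 2) ∨ (i.val = (n + 1) / 2 ∧ j = 0))) = {(n + 1) / 2} := by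
      ext a
      simp only [Finset.mem_filter, Finset.mem_range, Finset.mem_singleton]
      omega
    rw [this]
    simp [h0]
  · by_cases hc : i.val = (n + 1) / 2
    · have : ((Finset.range n).filter (fun j =>
          (i.val = 0 ∧ j = (n + 1) / 2) ∨ (i.val = (n + 1) / 2 ∧ j = 0))) = {0} := by
        ext a
        simp only [Finset.mem_filter, Finset.mem_range, Finset.mem_singleton]
        omega
      rw [this]
      simp [hc]
    · have : ((Finset.range n).filter (fun j =>
          (i.val = 0 ∧ j = (n + 1) / 2) ∨ (i.val = (n + 1) / 2 ∧ j = 0))) = ∅ := by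
        rw [Finset.eq_empty_iff_forall_notMem]
        intro a ha
        simp only [Finset.mem_filter, Finset.mem_range] at ha
        omega
      rw [this]
      simp [h0, hc]


lemma pow23_inj {a e c f : ℕ} (h : 2 ^ a * 3 ^ e = 2 ^ c * 3 ^ f) : a = c ∧ e = f := by
  have H : ∀ x y : ℕ, (2 ^ x * 3 ^ y).factorization
      = Finsupp.single 2 x + Finsupp.single 3 y := by
    intro x y
    rw [Nat.factorization_mul (by positivity) (by positivity),
      Nat.Prime.factorization_pow Nat.prime_two, Nat.Prime.factorization_pow Nat.prime_three]
  have key := congrArg Nat.factorization h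
  rw [H, H] at key
  constructor
  · have := congrArg (fun g : ℕ →₀ ℕ => g 2) key
    simpa [Finsupp.single_apply] using this
  · have := congrArg (fun g : ℕ →₀ ℕ => g 3) key
    simpa [Finsupp.single_apply] using this

open scoped Classical in
lemma pdeg_www_inl (a : Fin 1) :
    pdeg (addEdge (cliquePair 1 n) (Sum.inl 0) (Sum.inr b)) (www n) (Sum.inl a) = 1 := by
  rw [pdeg_inl]
  rfl

open scoped Classical in
lemma pdeg_www_inr (hn : 4 ≤ n) (i : Fin n) :
    pdeg (addEdge (cliquePair 1 n) (Sum.inl 0) (Sum.inr b)) (www n) (Sum.inr i)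
      = 2 ^ (if n ≤ 2 * i.val then i.val - 1 else i.val)
        * 3 ^ (if i.val = 0 ∨ i.val = (n + 1) / 2 then 1 else 0) := by
  rw [pdeg_inr]
  have h1 : (if i = b then www n s(Sum.inr i, Sum.inl 0) else 1) = 1 := by
    split_ifs <;> rfl
  rw [h1, one_mul]
  have h2 : ∀ j : Fin n, (if i ≠ j then www n s(Sum.inr i, Sum.inr j) else 1)
      = (if (i.val ≠ j.val ∧ n ≤ i.val + j.val) then 2 else 1)
        * (if ((i.val = 0 ∧ j.val = (n + 1) / 2) ∨ (i.val = (n + 1) / 2 ∧ j.val = 0))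
            then 3 else 1) := by
    intro j
    rw [www_mk]
    show (if i ≠ j then gg n i.val j.val else 1) = _
    rw [if_congr (show (i ≠ j) ↔ (i.val ≠ j.val) by simp [Fin.ext_iff]) rfl rfl]
    have hi := i.isLt
    have hj := j.isLt
    unfold gg
    split_ifs <;> omega
  rw [Finset.prod_congr rfl (fun j _ => h2 j), Finset.prod_mul_distrib,
    prod_ite_const, prod_ite_const, card_D, card_T hn]

open scoped Classical in
lemma www_irregular (hn : 4 ≤ n) :
    ProductIrregular (addEdge (cliquePair 1 n) (Sum.inl 0) (Sum.inr b)) (www n) := by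
  intro x y h
  have hne1 : ∀ i : Fin n,
      pdeg (addEdge (cliquePair 1 n) (Sum.inl 0) (Sum.inr b)) (www n) (Sum.inr i) ≠ 1 := by
    intro i
    rw [pdeg_www_inr hn]
    by_cases h0 : i.val = 0 ∨ i.val = (n + 1) / 2
    · simp only [h0, if_true, pow_one]
      have h1 : 1 ≤ 2 ^ (if n ≤ 2 * i.val then i.val - 1 else i.val) := Nat.one_le_two_pow
      omega
    · simp only [h0, if_false, pow_zero, mul_one]
      have hd : (if n ≤ 2 * i.val then i.val - 1 else i.val) ≠ 0 := by
        push_neg at h0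
        split_ifs with hcase <;> omega
      exact (Nat.one_lt_two_pow_iff.2 hd).ne'
  cases x with
  | inl a =>
    cases y with
    | inl c => rw [Subsingleton.elim a c]
    | inr j =>
      exfalso
      rw [pdeg_www_inl] at h
      exact hne1 j h.symm
  | inr i =>
    cases y with
    | inl c =>
      exfalso
      rw [pdeg_www_inl] at h
      exact hne1 i h
    | inr j =>
      rw [pdeg_www_inr hn, pdeg_www_inr hn] at h
      obtain ⟨hd, ht⟩ := pow23_inj h
      have : i.val = j.val := by
        by_cases hi0 : i.val = 0 ∨ i.val = (n + 1) / 2 <;>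
          by_cases hj0 : j.val = 0 ∨ j.val = (n + 1) / 2 <;>
          simp only [hi0, hj0, if_true, if_false] at ht hd <;>
          split_ifs at hd <;> omega
      exact congrArg Sum.inr (Fin.ext this)

end Aux


/-- For every `n ≥ 4`, `K_n` with a pendant vertex attached has product irregularity
strength `3`. -/
theorem stmt_7 (n : ℕ) (hn : 4 ≤ n) (b : Fin n) :
    ps (addEdge (cliquePair 1 n) (Sum.inl 0) (Sum.inr b)) = 3 := by
  have h3 : (3 : ℕ) ∈ {s : ℕ | ∃ w : Sym2 (Fin 1 ⊕ Fin n) → ℕ,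
      (∀ u v : Fin 1 ⊕ Fin n,
        (addEdge (cliquePair 1 n) (Sum.inl 0) (Sum.inr b)).Adj u v →
          w s(u, v) ∈ Finset.Icc 1 3) ∧
      ProductIrregular (addEdge (cliquePair 1 n) (Sum.inl 0) (Sum.inr b)) w} :=
    ⟨www n, fun u v _ => www_mk n u v ▸ fff_mem n u v, www_irregular hn⟩
  unfold ps
  apply le_antisymm
  · exact Nat.sInf_le h3
  · refine le_csInf ⟨3, h3⟩ ?_
    intro s hs
    by_contra hs3
    push_neg at hs3
    obtain ⟨w, hw, hirr⟩ := hs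
    refine no_two_labelling hn w (fun u v hadj => ?_) hirr
    have := hw u v hadj
    simp only [Finset.mem_Icc] at this ⊢
    omega
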